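/- Let N ≥ 2 and 1 ≤ s ≤ ⌊N/2⌋ be integers, and t₁, t₂ ∈ ℝ with t₁·t₂ ≠ 0. If (t₁ cos(2ksπ/N) + t₂ sin(2ksπ/N))² takes the same value for all k = 0,1,…,N-1, then sin(4sπ/N) = 0, hence 4s/N ∈ ℤ, so s = N/4 or s = N/2. -/

import Mathlib

open Real

/-- Consistency condition for linear combinations `t₁u₁^{s,N} + t₂u₂^{s,N}`: if
`(t₁cos(2ksπ/N) + t₂sin(2ksπ/N))²` is the same for all `k = 0,…,N-1` and `t₁t₂ ≠ 0`,
then `sin(4sπ/N) = 0`, hence `s = N/4` or `s = N/2`. -/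
theorem fleck_hutchinson_combination_consistency
    (N s : ℕ) (hN : 2 ≤ N) (hs1 : 1 ≤ s) (hs2 : 2 * s ≤ N)
    (t₁ t₂ : ℝ) (ht : t₁ * t₂ ≠ 0)
    (h : ∀ k < N, ∀ l < N,
      (t₁ * Real.cos (2 * (k : ℝ) * (s : ℝ) * π / (N : ℝ))
        + t₂ * Real.sin (2 * (k : ℝ) * (s : ℝ) * π / (N : ℝ))) ^ 2
      = (t₁ * Real.cos (2 * (l : ℝ) * (s : ℝ) * π / (N : ℝ))
        + t₂ * Real.sin (2 * (l : ℝ) * (s : ℝ) * π / (N : ℝ))) ^ 2) :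
    Real.sin (4 * (s : ℝ) * π / (N : ℝ)) = 0 ∧ (4 * s = N ∨ 2 * s = N) := by
  have hNpos : (0 : ℝ) < N := by positivity
  have hNne : (N : ℝ) ≠ 0 := ne_of_gt hNpos
  have h1 : (1 : ℕ) < N := hN
  have h2 : N - 1 < N := by omega
  have key := h 1 h1 (N - 1) h2
  have hcast : ((N - 1 : ℕ) : ℝ) = (N : ℝ) - 1 := by
    have : (1 : ℕ) ≤ N := by omega
    push_cast [this]; ring
  set x : ℝ := 2 * (s : ℝ) * π / (N : ℝ) with hx
  have hang : 2 * ((N - 1 : ℕ) : ℝ) * (s : ℝ) * π / (N : ℝ)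
      = (s : ℤ) * (2 * π) - x := by
    rw [hcast]; field_simp [hx]; rw [hx, mul_sub (N : ℝ), mul_div_cancel₀ _ hNne]; push_cast; ring
  have hx1 : 2 * (1 : ℝ) * (s : ℝ) * π / (N : ℝ) = x := by rw [hx]; ring
  rw [show ((1 : ℕ) : ℝ) = (1 : ℝ) from by norm_num] at key
  rw [hx1, hang] at key
  rw [Real.cos_int_mul_two_pi_sub] at key
  have hsin : Real.sin ((s : ℤ) * (2 * π) - x) = - Real.sin x := by
    rw [show ((s : ℤ) : ℝ) * (2 * π) - x = -x + (s : ℤ) * (2 * π) from by ring,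
      Real.sin_add_int_mul_two_pi, Real.sin_neg]
  rw [hsin] at key
  have hcs : Real.cos x * Real.sin x = 0 := by
    have h4 : 4 * (t₁ * t₂) * (Real.cos x * Real.sin x) = 0 := by nlinarith [key]
    have : (4 : ℝ) * (t₁ * t₂) ≠ 0 := by
      intro hz; apply ht; nlinarith
    exact (mul_eq_zero.mp h4).resolve_left this
  have hsin4 : Real.sin (4 * (s : ℝ) * π / (N : ℝ)) = 0 := by
    have : 4 * (s : ℝ) * π / (N : ℝ) = 2 * x := by rw [hx]; ring
    rw [this, Real.sin_two_mul]
    linear_combination 2 * hcs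
  refine ⟨hsin4, ?_⟩
  rw [Real.sin_eq_zero_iff] at hsin4
  obtain ⟨n, hn⟩ := hsin4
  have hpi : π ≠ 0 := Real.pi_ne_zero
  have hnN : (n : ℝ) * N = 4 * s := by
    have := hn
    field_simp at this
    nlinarith [Real.pi_pos]
  have hnNz : n * (N : ℤ) = 4 * s := by exact_mod_cast hnN
  have hn1 : 1 ≤ n := by nlinarith [hnNz, (by exact_mod_cast hN : (2:ℤ) ≤ N), (by exact_mod_cast hs1 : (1:ℤ) ≤ s)]
  have hn2 : n ≤ 2 := by nlinarith [hnNz, (by exact_mod_cast hs2 : 2 * (s:ℤ) ≤ N), (by exact_mod_cast hN : (2:ℤ) ≤ N)]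
  interval_cases n <;> omega
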